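/- Let 𝒪 be a Henselian local ring (for example, the ring of integers of a nonarchimedean local field, or any complete discrete valuation ring) whose residue field is finite with more than 2 elements. Then for every f ∈ 𝒪ˣ, the diagonal matrix diag(f, f⁻¹) lies in the commutator subgroup of SL₂(𝒪). -/

import Mathlib

open Matrix IsLocalRing Polynomial
open scoped commutatorElement


/-- The diagonal matrix `[[f,0],[0,f⁻¹]]` as an element of `SL₂(R)`, for a unit `f`. -/
def diagSL {R : Type*} [CommRing R] (f : Rˣ) : Matrix.SpecialLinearGroup (Fin 2) R :=
  ⟨!![(f : R), 0; 0, ((f⁻¹ : Rˣ) : R)], by simp [Matrix.det_fin_two_of]⟩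

namespace SL2aux

variable {O : Type*} [CommRing O]

abbrev SL2 (O : Type*) [CommRing O] := Matrix.SpecialLinearGroup (Fin 2) O

def E (x : O) : SL2 O := ⟨!![1, x; 0, 1], by simp [Matrix.det_fin_two_of]⟩
def F (x : O) : SL2 O := ⟨!![1, 0; x, 1], by simp [Matrix.det_fin_two_of]⟩
def W : SL2 O := ⟨!![0, 1; -1, 0], by simp [Matrix.det_fin_two_of]⟩
def negI : SL2 O := ⟨!![-1, 0; 0, -1], by simp [Matrix.det_fin_two_of]⟩

lemma comm_eq {G : Type*} [Group G] {a b c : G} (h : a * b = c * (b * a)) : ⁅a, b⁆ = c := by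
  rw [commutatorElement_def, h]
  group

lemma comm_mem {G : Type*} [Group G] {a b c : G} (h : a * b = c * (b * a)) :
    c ∈ commutator G := by
  rw [← comm_eq h, commutator_def]
  exact Subgroup.commutator_mem_commutator (Subgroup.mem_top a) (Subgroup.mem_top b)

lemma key1 (u : Oˣ) (z : O) :
    diagSL u * E z = E (((u : O)^2 - 1) * z) * (E z * diagSL u) := by
  have h : (u : O) * ((u⁻¹ : Oˣ) : O) = 1 := u.mul_inv
  apply Subtype.ext
  simp only [Matrix.SpecialLinearGroup.coe_mul]; simp only [diagSL, E, Matrix.mul_fin_two]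
  ext i j
  fin_cases i <;> fin_cases j <;> simp <;> linear_combination (-(z * (u:O)) : O) * h

lemma E_mem (u : Oˣ) (hu : IsUnit ((u : O)^2 - 1)) (y : O) :
    E y ∈ commutator (SL2 O) := by
  obtain ⟨v, hv⟩ := hu
  have h2 := comm_mem (G := SL2 O) (key1 u (((v⁻¹ : Oˣ) : O) * y))
  rwa [show ((u : O)^2 - 1) * (((v⁻¹ : Oˣ) : O) * y) = y by
    rw [← hv, ← mul_assoc, v.mul_inv, one_mul]] at h2

lemma F_conj (y : O) : F y = W * E (-y) * W⁻¹ := by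
  rw [eq_mul_inv_iff_mul_eq]
  apply Subtype.ext
  simp only [Matrix.SpecialLinearGroup.coe_mul]; simp only [F, E, W, Matrix.mul_fin_two]
  norm_num

lemma F_mem (u : Oˣ) (hu : IsUnit ((u : O)^2 - 1)) (y : O) :
    F y ∈ commutator (SL2 O) := by
  rw [F_conj]
  exact Subgroup.Normal.conj_mem inferInstance _ (E_mem u hu (-y)) W

lemma diag_decomp (f : Oˣ) :
    diagSL f = E (f : O) * F (-((f⁻¹ : Oˣ) : O)) * E (f : O) * (E (-1) * F 1 * E (-1)) := by
  have h : (f : O) * ((f⁻¹ : Oˣ) : O) = 1 := f.mul_inv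
  apply Subtype.ext
  simp only [Matrix.SpecialLinearGroup.coe_mul]; simp only [diagSL, E, F, Matrix.mul_fin_two]
  ext i j
  fin_cases i <;> fin_cases j <;> simp

lemma sq_comm (g : Oˣ) : diagSL (g * g) ∈ commutator (SL2 O) := by
  apply comm_mem (a := diagSL g) (b := W)
  apply Subtype.ext
  simp only [Matrix.SpecialLinearGroup.coe_mul]; simp only [diagSL, W, Matrix.mul_fin_two,
    _root_.mul_inv_rev]
  ext i j
  fin_cases i <;> fin_cases j <;> simp

/-- `-I` is in the commutator subgroup provided `a^2 = -2` is solvable. -/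
lemma negI_mem (a : O) (ha : a^2 = -2) : (negI : SL2 O) ∈ commutator (SL2 O) := by
  have hdet : Matrix.det !![a, 1; 1, -a] = 1 := by
    simp [Matrix.det_fin_two_of]
    linear_combination -ha
  set B : SL2 O := ⟨!![a, 1; 1, -a], hdet⟩ with hB
  have key : W * B = negI * (B * W) := by
    apply Subtype.ext
    simp only [Matrix.SpecialLinearGroup.coe_mul]; rw [hB]; simp only [W, negI, Matrix.mul_fin_two]
    ext i j
    fin_cases i <;> fin_cases j <;> simp
  exact comm_mem key

lemma negI_mul (f g : Oˣ) (hfg : f = -(g * g)) :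
    diagSL f = (negI : SL2 O) * diagSL (g * g) := by
  apply Subtype.ext
  simp only [Matrix.SpecialLinearGroup.coe_mul]; simp only [diagSL, negI, Matrix.mul_fin_two, hfg]
  ext i j
  fin_cases i <;> fin_cases j <;> simp

variable [HenselianLocalRing O]

lemma sq_root (c : O) (h : (1:O) - c ∈ maximalIdeal O) (h2 : IsUnit (2 : O)) :
    ∃ a : O, a^2 = c := by
  obtain ⟨a, ha, -⟩ := HenselianLocalRing.is_henselian (X^2 - C c)
    (monic_X_pow_sub_C c two_ne_zero) 1 (by simpa using h)
    (by simpa [one_add_one_eq_two] using h2)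
  refine ⟨a, ?_⟩
  have : a^2 - c = 0 := by simpa using ha
  exact sub_eq_zero.mp this

end SL2aux

open SL2aux

/-- Let `𝒪` be a Henselian local ring whose residue field is finite with more than two
elements.  Then for every unit `f`, the diagonal matrix `diag(f, f⁻¹)` lies in the
commutator subgroup of `SL₂(𝒪)`. -/
theorem stmt_8 {O : Type*} [CommRing O] [HenselianLocalRing O]
    [Fintype (IsLocalRing.ResidueField O)]
    (hq : 2 < Fintype.card (IsLocalRing.ResidueField O)) (f : Oˣ) :
    diagSL f ∈ commutator (Matrix.SpecialLinearGroup (Fin 2) O) := by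
  classical
  by_cases hex : ∃ u : Oˣ, IsUnit ((u : O)^2 - 1)
  · obtain ⟨u, hu⟩ := hex
    rw [diag_decomp f]
    exact mul_mem (mul_mem (mul_mem (E_mem u hu _) (F_mem u hu _)) (E_mem u hu _))
      (mul_mem (mul_mem (E_mem u hu _) (F_mem u hu _)) (E_mem u hu _))
  · push_neg at hex
    have hmem : ∀ u : Oˣ, (u : O)^2 - 1 ∈ maximalIdeal O := fun u =>
      (IsLocalRing.mem_maximalIdeal _).mpr (hex u)
    -- every element of k is 0, 1, or -1
    have h1 : ∀ x : IsLocalRing.ResidueField O, x = 0 ∨ x = 1 ∨ x = -1 := by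
      intro x
      obtain ⟨y, rfl⟩ := Ideal.Quotient.mk_surjective x
      by_cases hy : IsUnit y
      · obtain ⟨u, rfl⟩ := hy
        have : (IsLocalRing.residue O) ((u : O)^2 - 1) = 0 :=
          Ideal.Quotient.eq_zero_iff_mem.mpr (hmem u)
        have hsq : (Ideal.Quotient.mk (maximalIdeal O) (u : O))^2 - 1 = 0 := by
          rw [← map_pow, ← _root_.map_one (Ideal.Quotient.mk (maximalIdeal O)), ← map_sub]; exact this
        have : ((Ideal.Quotient.mk (maximalIdeal O) (u : O)) - 1) *
            ((Ideal.Quotient.mk (maximalIdeal O) (u : O)) + 1) = 0 := by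
          linear_combination hsq
        rcases mul_eq_zero.mp this with h | h
        · right; left; exact sub_eq_zero.mp h
        · right; right; exact eq_neg_of_add_eq_zero_left h
      · left
        exact Ideal.Quotient.eq_zero_iff_mem.mpr
          ((IsLocalRing.mem_maximalIdeal _).mpr hy)
    have hcard : Fintype.card (IsLocalRing.ResidueField O) ≤ 3 := by
      have hsub : (Finset.univ : Finset (IsLocalRing.ResidueField O)) ⊆ {0, 1, -1} := by
        intro x _
        rcases h1 x with h | h | h <;> simp [h]
      calc Fintype.card (IsLocalRing.ResidueField O) = (Finset.univ : Finset (IsLocalRing.ResidueField O)).card := rfl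
        _ ≤ ({0, 1, -1} : Finset (IsLocalRing.ResidueField O)).card := Finset.card_le_card hsub
        _ ≤ 3 := by
          apply le_trans (Finset.card_insert_le _ _)
          simp [Finset.card_insert_le]
          exact Nat.lt_of_le_of_lt Finset.card_le_two (by norm_num)
    have h3 : Fintype.card (IsLocalRing.ResidueField O) = 3 := le_antisymm hcard hq
    have hk3 : (3 : IsLocalRing.ResidueField O) = 0 := by
      have := FiniteField.cast_card_eq_zero (IsLocalRing.ResidueField O)
      rw [h3] at this
      exact_mod_cast this
    have hres3 : (3 : O) ∈ maximalIdeal O := by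
      rw [← Ideal.Quotient.eq_zero_iff_mem]
      have : (Ideal.Quotient.mk (maximalIdeal O)) (3 : O) = (3 : IsLocalRing.ResidueField O) := by push_cast; rfl
      rw [this, hk3]; rfl
    have h2unit : IsUnit (2 : O) := by
      by_contra h2
      have : (2 : O) ∈ maximalIdeal O := (IsLocalRing.mem_maximalIdeal _).mpr h2
      have h1m := Ideal.sub_mem _ hres3 this
      rw [show (3 : O) - 2 = 1 by norm_num] at h1m
      exact (IsLocalRing.maximalIdeal.isMaximal O).ne_top
        (Ideal.eq_top_of_isUnit_mem _ h1m isUnit_one)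
    -- residue of f is 1 or -1
    have hf := hmem f
    have hfres : (Ideal.Quotient.mk (maximalIdeal O)) (f : O) = 1 ∨
        (Ideal.Quotient.mk (maximalIdeal O)) (f : O) = -1 := by
      have h0 : (Ideal.Quotient.mk (maximalIdeal O)) ((f : O)^2 - 1) = 0 :=
        Ideal.Quotient.eq_zero_iff_mem.mpr hf
      have hsq : (Ideal.Quotient.mk (maximalIdeal O) (f : O))^2 - 1 = 0 := by
        rw [← h0]; push_cast [map_sub, map_pow, _root_.map_one]; rfl
      have : ((Ideal.Quotient.mk (maximalIdeal O) (f : O)) - 1) *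
          ((Ideal.Quotient.mk (maximalIdeal O) (f : O)) + 1) = 0 := by
        linear_combination hsq
      rcases mul_eq_zero.mp this with h | h
      · left; linear_combination h
      · right; linear_combination h
    rcases hfres with hf1 | hf1
    · -- f is a square
      obtain ⟨g, hg⟩ := sq_root ((f : O)) (by
        rw [← Ideal.Quotient.eq_zero_iff_mem, map_sub, _root_.map_one, hf1, sub_self]) h2unit
      have hgu : IsUnit g := by
        have : IsUnit (g * g) := by rw [← pow_two, hg]; exact f.isUnit
        exact isUnit_of_mul_isUnit_left this
      obtain ⟨gu, rfl⟩ := hgu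
      have hfg : f = gu * gu := by
        ext
        rw [← hg]; push_cast; ring
      rw [hfg]
      exact sq_comm gu
    · -- -f is a square
      obtain ⟨g, hg⟩ := sq_root (-(f : O)) (by
        rw [← Ideal.Quotient.eq_zero_iff_mem]
        simp only [map_sub, _root_.map_one, map_neg, hf1]
        ring) h2unit
      have hgu : IsUnit g := by
        have : IsUnit (g * g) := by rw [← pow_two, hg]; exact (f.isUnit).neg
        exact isUnit_of_mul_isUnit_left this
      obtain ⟨gu, rfl⟩ := hgu
      have hfg : f = -(gu * gu) := by
        ext
        push_cast
        rw [show ((gu : O) * gu) = (gu : O)^2 from (pow_two _).symm, hg]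
        ring
      obtain ⟨a, ha⟩ := sq_root (-2 : O) (by
        rw [show (1 : O) - -2 = 3 by norm_num]
        exact hres3) h2unit
      rw [negI_mul f gu hfg]
      exact mul_mem (negI_mem a ha) (sq_comm gu)
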